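/- For any convex open set X ⊆ R^n, the function i_X on matroids on [n], defined by i_X(M) = 1 if Q(M) ∩ X ≠ ∅ and 0 otherwise (with i_X(∅)=0), is a valuation: for every matroid subdivision {M_1,...,M_m} of a matroid M, Σ_{A ⊆ [m]} (-1)^{|A|} i_X(M_A) = 0. -/

import Mathlib

open Finset
open scoped Pointwise

/-- The indicator vector `e_B ∈ ℝⁿ` of a subset `B ⊆ [n]`. -/
def indVec (n : ℕ) (B : Finset (Fin n)) : Fin n → ℝ := fun i => if i ∈ B then 1 else 0

/-- A collection of subsets of `[n]` is the collection of bases of a matroid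
(possibly the empty matroid) iff it satisfies the basis exchange axiom. -/
def IsBases {n : ℕ} (𝓑 : Finset (Finset (Fin n))) : Prop :=
  ∀ B₁ ∈ 𝓑, ∀ B₂ ∈ 𝓑, ∀ b₁ ∈ B₁ \ B₂, ∃ b₂ ∈ B₂ \ B₁, insert b₂ (B₁.erase b₁) ∈ 𝓑

/-- The matroid (basis) polytope: convex hull of indicator vectors of the bases. -/
def polytope {n : ℕ} (𝓑 : Finset (Finset (Fin n))) : Set (Fin n → ℝ) :=
  convexHull ℝ (indVec n '' ↑𝓑)

/-- A subdivision of a polytope `P` into polytopes `Ps i`: their union is `P`,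
their vertices are vertices of `P`, and each pairwise intersection is a proper
(exposed) face of both pieces. -/
def IsSubdivision {n m : ℕ} (P : Set (Fin n → ℝ)) (Ps : Fin m → Set (Fin n → ℝ)) : Prop :=
  (⋃ i, Ps i) = P ∧
  (∀ i, Set.extremePoints ℝ (Ps i) ⊆ Set.extremePoints ℝ P) ∧
  ∀ i j, i ≠ j →
    IsExposed ℝ (Ps i) (Ps i ∩ Ps j) ∧ IsExposed ℝ (Ps j) (Ps i ∩ Ps j) ∧
    Ps i ∩ Ps j ≠ Ps i ∧ Ps i ∩ Ps j ≠ Ps j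

/-- A matroid subdivision of the matroid `𝓑` into the matroids `𝓜 i`. -/
def IsMatroidSubdivision {n m : ℕ} (𝓑 : Finset (Finset (Fin n)))
    (𝓜 : Fin m → Finset (Finset (Fin n))) : Prop :=
  IsBases 𝓑 ∧ (∀ i, IsBases (𝓜 i)) ∧ IsSubdivision (polytope 𝓑) fun i => polytope (𝓜 i)

open Classical in
/-- For `A ⊆ [m]`, the matroid `M_A` whose polytope is `⋂_{a ∈ A} Q(M_a)`:
its bases are the bases of `M` whose indicator vector lies in every `Q(M_a)`, `a ∈ A`.
For `A = ∅` this is `M` itself. -/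
noncomputable def interMatroid {n m : ℕ} (𝓑 : Finset (Finset (Fin n)))
    (𝓜 : Fin m → Finset (Finset (Fin n))) (A : Finset (Fin m)) : Finset (Finset (Fin n)) :=
  𝓑.filter fun B => ∀ a ∈ A, indVec n B ∈ polytope (𝓜 a)

/-- `f` is a valuation under matroid subdivisions:
`∑_{A ⊆ [m]} (-1)^{|A|} f(M_A) = 0` for every matroid subdivision. -/
def IsValuation {n : ℕ} {G : Type*} [AddCommGroup G] (f : Finset (Finset (Fin n)) → G) : Prop :=
  ∀ (m : ℕ) (𝓑 : Finset (Finset (Fin n))) (𝓜 : Fin m → Finset (Finset (Fin n))),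
    IsMatroidSubdivision 𝓑 𝓜 →
    ∑ A : Finset (Fin m), (-1 : ℤ) ^ A.card • f (interMatroid 𝓑 𝓜 A) = 0



open Classical in
noncomputable def indZ {α : Type*} (S : Set α) (y : α) : ℤ := if y ∈ S then 1 else 0

open Classical in
noncomputable def neZ {α : Type*} (S : Set α) : ℤ := if S.Nonempty then 1 else 0

lemma indZ_pos {α : Type*} {S : Set α} {y : α} (h : y ∈ S) : indZ S y = 1 := by simp [indZ, h]
lemma indZ_neg {α : Type*} {S : Set α} {y : α} (h : y ∉ S) : indZ S y = 0 := by simp [indZ, h]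
lemma neZ_pos {α : Type*} {S : Set α} (h : S.Nonempty) : neZ S = 1 := by simp [neZ, h]
lemma neZ_neg {α : Type*} {S : Set α} (h : ¬ S.Nonempty) : neZ S = 0 := by simp [neZ, h]

lemma cc_eq_Icc {J : Set ℝ} (hc : IsCompact J) (hv : Convex ℝ J) (hne : J.Nonempty) :
    J = Set.Icc (sInf J) (sSup J) := by
  apply Set.Subset.antisymm
  · exact fun x hx => ⟨csInf_le hc.bddBelow hx, le_csSup hc.bddAbove hx⟩
  · exact hv.ordConnected.out (hc.sInf_mem hne) (hc.sSup_mem hne)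

lemma interval_lemma {ι : Type} [Fintype ι] (c : ι → ℤ) (J : ι → Set ℝ)
    (hcpt : ∀ i, IsCompact (J i)) (hconv : ∀ i, Convex ℝ (J i))
    (h : ∀ t : ℝ, ∑ i, c i * indZ (J i) t = 0) :
    ∑ i, c i * neZ (J i) = 0 := by
  classical
  obtain ⟨E, S, hSE, haE, hbS⟩ :
      ∃ (E S : Finset ℝ), S ⊆ E ∧ (∀ i, sInf (J i) ∈ E) ∧ (∀ i, sSup (J i) ∈ S) :=
    ⟨(univ.image fun i => sInf (J i)) ∪ (univ.image fun i => sSup (J i)),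
      univ.image fun i => sSup (J i), subset_union_right,
      fun i => Finset.mem_union_left _ (Finset.mem_image.2 ⟨i, mem_univ i, rfl⟩),
      fun i => Finset.mem_image.2 ⟨i, mem_univ i, rfl⟩⟩
  obtain ⟨δ, hδpos, hδ⟩ : ∃ δ : ℝ, 0 < δ ∧ ∀ s ∈ E, ∀ e ∈ E, s < e → s + δ < e := by
    by_cases hD : (((E ×ˢ E).image fun p => p.2 - p.1).filter (0 < ·)).Nonempty
    · set D := ((E ×ˢ E).image fun p => p.2 - p.1).filter (0 < ·) with hDdef
      have hminpos : 0 < D.min' hD := (Finset.mem_filter.1 (D.min'_mem hD)).2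
      refine ⟨D.min' hD / 2, by linarith, fun s hs e he hlt => ?_⟩
      have hmem : e - s ∈ D := Finset.mem_filter.2
        ⟨Finset.mem_image.2 ⟨(s, e), Finset.mk_mem_product hs he, rfl⟩, by linarith⟩
      have hmin : D.min' hD ≤ e - s := D.min'_le _ hmem
      linarith
    · refine ⟨1, one_pos, fun s hs e he hlt => ?_⟩
      exfalso
      exact hD ⟨e - s, Finset.mem_filter.2
        ⟨Finset.mem_image.2 ⟨(s, e), Finset.mk_mem_product hs he, rfl⟩, by linarith⟩⟩
  have key : ∀ i, c i * neZ (J i) = ∑ s ∈ S, c i * (indZ (J i) s - indZ (J i) (s + δ)) := by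
    intro i
    rcases (J i).eq_empty_or_nonempty with hJe | hJne
    · simp [hJe, neZ, indZ]
    · have hIcc := cc_eq_Icc (hcpt i) (hconv i) hJne
      have hab : sInf (J i) ≤ sSup (J i) :=
        csInf_le_csSup hJne (hcpt i).bddBelow (hcpt i).bddAbove
      have hterm : ∀ s ∈ S,
          indZ (J i) s - indZ (J i) (s + δ) = if s = sSup (J i) then 1 else 0 := by
        intro s hsS
        have hsE : s ∈ E := hSE hsS
        by_cases hsb : s = sSup (J i)
        · rw [if_pos hsb]
          have h1 : indZ (J i) s = 1 := indZ_pos (by rw [hIcc]; exact ⟨hsb ▸ hab, hsb.le⟩)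
          have h2 : indZ (J i) (s + δ) = 0 := indZ_neg (by
            rw [hIcc]; intro hmem; have := hmem.2; rw [hsb] at *; linarith)
          rw [h1, h2]; ring
        · rw [if_neg hsb]
          rcases lt_trichotomy s (sSup (J i)) with hlt | heq | hgt
          · by_cases hsa : s < sInf (J i)
            · have h1 : indZ (J i) s = 0 := indZ_neg (by
                rw [hIcc]; intro hmem; linarith [hmem.1])
              have h2 : indZ (J i) (s + δ) = 0 := indZ_neg (by
                rw [hIcc]; intro hmem
                have := hδ s hsE (sInf (J i)) (haE i) hsa
                linarith [hmem.1])
              rw [h1, h2]; ring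
            · push_neg at hsa
              have h1 : indZ (J i) s = 1 := indZ_pos (by rw [hIcc]; exact ⟨hsa, hlt.le⟩)
              have h2 : indZ (J i) (s + δ) = 1 := indZ_pos (by
                rw [hIcc]
                exact ⟨by linarith, (hδ s hsE (sSup (J i)) (hSE (hbS i)) hlt).le⟩)
              rw [h1, h2]; ring
          · exact absurd heq hsb
          · have h1 : indZ (J i) s = 0 := indZ_neg (by
              rw [hIcc]; intro hmem; linarith [hmem.2])
            have h2 : indZ (J i) (s + δ) = 0 := indZ_neg (by
              rw [hIcc]; intro hmem; linarith [hmem.2])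
            rw [h1, h2]; ring
      have hsum : ∑ s ∈ S, (indZ (J i) s - indZ (J i) (s + δ)) = 1 := by
        rw [Finset.sum_congr rfl hterm,
          Finset.sum_ite_eq' S (sSup (J i)) (fun _ => (1 : ℤ)), if_pos (hbS i)]
      rw [neZ_pos hJne, ← Finset.mul_sum, hsum]
  calc ∑ i, c i * neZ (J i) = ∑ i, ∑ s ∈ S, c i * (indZ (J i) s - indZ (J i) (s + δ)) :=
        Finset.sum_congr rfl fun i _ => key i
    _ = ∑ s ∈ S, ∑ i, c i * (indZ (J i) s - indZ (J i) (s + δ)) := Finset.sum_comm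
    _ = 0 := by
        refine Finset.sum_eq_zero fun s _ => ?_
        have : ∀ i, c i * (indZ (J i) s - indZ (J i) (s + δ))
            = c i * indZ (J i) s - c i * indZ (J i) (s + δ) := fun i => by ring
        rw [Finset.sum_congr rfl fun i _ => this i, Finset.sum_sub_distrib, h s, h (s + δ)]
        ring

def sliceSet {n : ℕ} (t : ℝ) (S : Set (Fin (n + 1) → ℝ)) : Set (Fin n → ℝ) :=
  {z | Fin.cons t z ∈ S}

lemma continuous_tail {n : ℕ} : Continuous (Fin.tail : (Fin (n + 1) → ℝ) → (Fin n → ℝ)) :=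
  continuous_pi fun i => continuous_apply i.succ

lemma sliceSet_eq_image {n : ℕ} (t : ℝ) (S : Set (Fin (n + 1) → ℝ)) :
    sliceSet t S = Fin.tail '' (S ∩ {y | y 0 = t}) := by
  ext z
  constructor
  · intro hz
    exact ⟨Fin.cons t z, ⟨hz, by simp⟩, by simp⟩
  · rintro ⟨y, ⟨hyS, hy0⟩, rfl⟩
    have : Fin.cons t (Fin.tail y) = y := by rw [← hy0]; exact Fin.cons_self_tail y
    simpa [sliceSet, this] using hyS

lemma sliceSet_isCompact {n : ℕ} {t : ℝ} {S : Set (Fin (n + 1) → ℝ)} (hS : IsCompact S) :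
    IsCompact (sliceSet t S) := by
  rw [sliceSet_eq_image]
  exact (hS.inter_right (isClosed_eq (continuous_apply 0) continuous_const)).image continuous_tail

lemma sliceSet_convex {n : ℕ} {t : ℝ} {S : Set (Fin (n + 1) → ℝ)} (hS : Convex ℝ S) :
    Convex ℝ (sliceSet t S) := by
  intro z1 h1 z2 h2 a b ha hb hab
  have hc : Fin.cons t (a • z1 + b • z2) =
      a • (Fin.cons t z1 : Fin (n + 1) → ℝ) + b • (Fin.cons t z2 : Fin (n + 1) → ℝ) := by
    funext i
    cases i using Fin.cases with
    | zero =>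
      simp only [Fin.cons_zero, Pi.add_apply, Pi.smul_apply, smul_eq_mul]
      rw [← add_mul, hab, one_mul]
    | succ j => simp
  show Fin.cons t (a • z1 + b • z2) ∈ S
  rw [hc]
  exact hS h1 h2 ha hb hab


lemma groemer : ∀ (n : ℕ) {ι : Type} [Fintype ι] (c : ι → ℤ) (K : ι → Set (Fin n → ℝ)),
    (∀ i, IsCompact (K i)) → (∀ i, Convex ℝ (K i)) →
    (∀ y, ∑ i, c i * indZ (K i) y = 0) →
    ∀ (C : Set (Fin n → ℝ)), IsCompact C → Convex ℝ C →
    ∑ i, c i * neZ (K i ∩ C) = 0 := by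
  intro n
  induction n with
  | zero =>
    intro ι _ c K hcpt hconv hpt C _ _
    set d : Fin 0 → ℝ := fun i => i.elim0 with hd
    by_cases hdC : d ∈ C
    · have : ∀ i, neZ (K i ∩ C) = indZ (K i) d := by
        intro i
        by_cases hK : d ∈ K i
        · rw [indZ_pos hK, neZ_pos (show (K i ∩ C).Nonempty from ⟨d, hK, hdC⟩)]
        · refine (neZ_neg ?_).trans (indZ_neg hK).symm
          rintro ⟨y, hy⟩
          exact hK ((Subsingleton.elim y d) ▸ hy.1)
      rw [Finset.sum_congr rfl fun i _ => by rw [this i]]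
      exact hpt d
    · refine Finset.sum_eq_zero fun i _ => ?_
      have : neZ (K i ∩ C) = 0 := by
        refine neZ_neg ?_
        rintro ⟨y, hy⟩
        exact hdC ((Subsingleton.elim y d) ▸ hy.2)
      rw [this, mul_zero]
  | succ n ih =>
    intro ι _ c K hcpt hconv hpt C hCcpt hCconv
    set J : ι → Set ℝ := fun i => (fun y => y 0) '' (K i ∩ C) with hJ
    have hJcpt : ∀ i, IsCompact (J i) := fun i =>
      (((hcpt i).inter_right hCcpt.isClosed).image (continuous_apply 0))
    have hJconv : ∀ i, Convex ℝ (J i) := fun i =>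
      ((hconv i).inter hCconv).linear_image (LinearMap.proj 0)
    have hJpt : ∀ t : ℝ, ∑ i, c i * indZ (J i) t = 0 := by
      intro t
      have hslice := ih c (fun i => sliceSet t (K i))
        (fun i => sliceSet_isCompact (hcpt i)) (fun i => sliceSet_convex (hconv i))
        (fun z => hpt (Fin.cons t z))
        (sliceSet t C) (sliceSet_isCompact hCcpt) (sliceSet_convex hCconv)
      rw [← hslice]
      refine Finset.sum_congr rfl fun i _ => ?_
      congr 1
      by_cases hmem : t ∈ J i
      · obtain ⟨y, ⟨hyK, hyC⟩, hy0⟩ := id hmem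
        have hy : Fin.cons t (Fin.tail y) = y := by
          rw [show t = y 0 from hy0.symm]; exact Fin.cons_self_tail y
        have hK : Fin.tail y ∈ sliceSet t (K i) := by
          show Fin.cons t (Fin.tail y) ∈ K i; rw [hy]; exact hyK
        have hC : Fin.tail y ∈ sliceSet t C := by
          show Fin.cons t (Fin.tail y) ∈ C; rw [hy]; exact hyC
        exact (indZ_pos hmem).trans (neZ_pos (show (sliceSet t (K i) ∩ sliceSet t C).Nonempty
          from ⟨Fin.tail y, hK, hC⟩)).symm
      · refine (indZ_neg hmem).trans (neZ_neg ?_).symm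
        rintro ⟨z, hz1, hz2⟩
        exact hmem ⟨Fin.cons t z, ⟨hz1, hz2⟩, by simp⟩
    have := interval_lemma c J hJcpt hJconv hJpt
    rw [← this]
    refine Finset.sum_congr rfl fun i _ => ?_
    congr 1
    by_cases hne : (K i ∩ C).Nonempty
    · rw [neZ_pos hne, neZ_pos (hne.image _)]
    · rw [neZ_neg hne, neZ_neg (fun hx => hne (Set.image_nonempty.1 hx))]

-- ## auxiliary facts about polytopes

lemma polytope_compact {n : ℕ} (𝓑 : Finset (Finset (Fin n))) : IsCompact (polytope 𝓑) :=
  ((𝓑.finite_toSet).image _).isCompact_convexHull ℝ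

lemma polytope_closed {n : ℕ} (𝓑 : Finset (Finset (Fin n))) : IsClosed (polytope 𝓑) :=
  ((𝓑.finite_toSet).image _).isClosed_convexHull ℝ

lemma polytope_convex {n : ℕ} (𝓑 : Finset (Finset (Fin n))) : Convex ℝ (polytope 𝓑) :=
  convex_convexHull ℝ _

lemma interMatroid_empty {n m : ℕ} (𝓑 : Finset (Finset (Fin n)))
    (𝓜 : Fin m → Finset (Finset (Fin n))) : interMatroid 𝓑 𝓜 ∅ = 𝓑 := by
  classical
  exact Finset.filter_true_of_mem fun B _ => fun a ha => absurd ha (Finset.notMem_empty a)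

lemma interMatroid_polytope_subset {n m : ℕ} (𝓑 : Finset (Finset (Fin n)))
    (𝓜 : Fin m → Finset (Finset (Fin n))) (A : Finset (Fin m)) :
    polytope (interMatroid 𝓑 𝓜 A) ⊆ polytope 𝓑 := by
  classical
  exact convexHull_min
    (fun v hv => subset_convexHull ℝ _
      (Set.image_mono (Finset.coe_subset.2 (Finset.filter_subset _ _)) hv))
    (polytope_convex 𝓑)

/-- The key structural fact: for nonempty `A`, the polytope of `interMatroid 𝓑 𝓜 A`
is exactly the intersection of the cell polytopes indexed by `A`. -/
lemma interMatroid_polytope {n m : ℕ} {𝓑 : Finset (Finset (Fin n))}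
    {𝓜 : Fin m → Finset (Finset (Fin n))}
    (hsub : IsSubdivision (polytope 𝓑) fun i => polytope (𝓜 i))
    {A : Finset (Fin m)} (hA : A.Nonempty) :
    polytope (interMatroid 𝓑 𝓜 A) = ⋂ a ∈ A, polytope (𝓜 a) := by
  classical
  obtain ⟨hunion, hext, hpair⟩ := hsub
  obtain ⟨a₀, ha₀⟩ := hA
  have sub1 : polytope (interMatroid 𝓑 𝓜 A) ⊆ ⋂ a ∈ A, polytope (𝓜 a) := by
    refine convexHull_min ?_ (convex_iInter fun a => convex_iInter fun _ => polytope_convex _)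
    rintro v ⟨B, hB, rfl⟩
    have hB' := Finset.mem_filter.1 (Finset.mem_coe.1 hB)
    exact Set.mem_iInter₂.2 fun a ha => hB'.2 a ha
  have expAux : ∀ s : Finset (Fin m), a₀ ∉ s →
      IsExposed ℝ (polytope (𝓜 a₀)) (polytope (𝓜 a₀) ∩ ⋂ a ∈ s, polytope (𝓜 a)) := by
    intro s
    induction s using Finset.induction_on with
    | empty =>
      intro _
      have h1 : (⋂ a ∈ (∅ : Finset (Fin m)), polytope (𝓜 a)) = Set.univ := by simp
      rw [h1, Set.inter_univ]
    | @insert a s ha ih =>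
      intro hnotin
      have ha₀a : a₀ ≠ a := fun h => hnotin (h ▸ Finset.mem_insert_self a s)
      have ha₀s : a₀ ∉ s := fun h => hnotin (Finset.mem_insert_of_mem h)
      rw [Finset.set_biInter_insert, Set.inter_inter_distrib_left]
      exact ((hpair a₀ a ha₀a).1).inter (ih ha₀s)
  have hFeq : (⋂ a ∈ A, polytope (𝓜 a))
      = polytope (𝓜 a₀) ∩ ⋂ a ∈ A.erase a₀, polytope (𝓜 a) := by
    conv_lhs => rw [← Finset.insert_erase ha₀]
    rw [Finset.set_biInter_insert]
  have hexp : IsExposed ℝ (polytope (𝓜 a₀)) (⋂ a ∈ A, polytope (𝓜 a)) := by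
    rw [hFeq]
    exact expAux (A.erase a₀) (Finset.notMem_erase a₀ A)
  have hFsub : (⋂ a ∈ A, polytope (𝓜 a)) ⊆ polytope (𝓜 a₀) :=
    Set.biInter_subset_of_mem ha₀
  have hFclosed : IsClosed (⋂ a ∈ A, polytope (𝓜 a)) :=
    isClosed_biInter fun a _ => polytope_closed _
  have hFcpt : IsCompact (⋂ a ∈ A, polytope (𝓜 a)) :=
    (polytope_compact (𝓜 a₀)).of_isClosed_subset hFclosed hFsub
  have hFconv : Convex ℝ (⋂ a ∈ A, polytope (𝓜 a)) :=
    convex_iInter fun a => convex_iInter fun _ => polytope_convex _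
  have hKM := closure_convexHull_extremePoints hFcpt hFconv
  have hEP : Set.extremePoints ℝ (⋂ a ∈ A, polytope (𝓜 a))
      ⊆ indVec n '' ↑(interMatroid 𝓑 𝓜 A) := by
    intro v hv
    have hv1 : v ∈ Set.extremePoints ℝ (polytope (𝓜 a₀)) :=
      hexp.isExtreme.extremePoints_subset_extremePoints hv
    have hv2 : v ∈ Set.extremePoints ℝ (polytope 𝓑) := hext a₀ hv1
    have hv3 : v ∈ indVec n '' ↑𝓑 := extremePoints_convexHull_subset hv2
    obtain ⟨B, hB, rfl⟩ := hv3
    have hvF : indVec n B ∈ ⋂ a ∈ A, polytope (𝓜 a) := extremePoints_subset hv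
    refine ⟨B, ?_, rfl⟩
    refine Finset.mem_coe.2 (Finset.mem_filter.2 ⟨Finset.mem_coe.1 hB, fun a ha => ?_⟩)
    exact Set.mem_iInter₂.1 hvF a ha
  refine Set.Subset.antisymm sub1 ?_
  calc (⋂ a ∈ A, polytope (𝓜 a))
      = closure (convexHull ℝ (Set.extremePoints ℝ (⋂ a ∈ A, polytope (𝓜 a)))) := hKM.symm
    _ ⊆ closure (polytope (interMatroid 𝓑 𝓜 A)) := closure_mono (convexHull_mono hEP)
    _ = polytope (interMatroid 𝓑 𝓜 A) := (polytope_closed _).closure_eq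

open Classical in
/-- For any convex open `X ⊆ ℝⁿ`, the function `i_X(M) = 1` if `Q(M) ∩ X ≠ ∅`
and `0` otherwise is a valuation under matroid subdivisions. -/
theorem statement_7 (n : ℕ) (X : Set (Fin n → ℝ)) (hconv : Convex ℝ X) (hopen : IsOpen X) :
    IsValuation fun 𝓑 : Finset (Finset (Fin n)) =>
      if (polytope 𝓑 ∩ X).Nonempty then (1 : ℤ) else 0 := by
  intro m 𝓑 𝓜 hms
  classical
  obtain ⟨-, -, hsub⟩ := hms
  obtain ⟨hunion, hext, hpair⟩ := hsub
  -- the pointwise inclusion-exclusion identity for the cell indicators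
  have hpt : ∀ y : Fin n → ℝ,
      ∑ A : Finset (Fin m), (-1 : ℤ) ^ A.card * indZ (polytope (interMatroid 𝓑 𝓜 A)) y = 0 := by
    intro y
    by_cases hy : y ∈ polytope 𝓑
    · have hTne : (univ.filter fun a : Fin m => y ∈ polytope (𝓜 a)).Nonempty := by
        rw [← hunion] at hy
        obtain ⟨a, ha⟩ := Set.mem_iUnion.1 hy
        exact ⟨a, Finset.mem_filter.2 ⟨mem_univ a, ha⟩⟩
      set T : Finset (Fin m) := univ.filter fun a : Fin m => y ∈ polytope (𝓜 a) with hT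
      have hkey : ∀ A : Finset (Fin m),
          indZ (polytope (interMatroid 𝓑 𝓜 A)) y = if A ⊆ T then 1 else 0 := by
        intro A
        rcases A.eq_empty_or_nonempty with rfl | hA
        · rw [if_pos (Finset.empty_subset T), interMatroid_empty]
          exact indZ_pos hy
        · rw [interMatroid_polytope ⟨hunion, hext, hpair⟩ hA]
          by_cases hAT : A ⊆ T
          · rw [if_pos hAT]
            exact indZ_pos (Set.mem_iInter₂.2 fun a ha => (Finset.mem_filter.1 (hAT ha)).2)
          · rw [if_neg hAT]
            refine indZ_neg fun hmem => hAT fun a ha => ?_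
            exact Finset.mem_filter.2 ⟨mem_univ a, Set.mem_iInter₂.1 hmem a ha⟩
      calc ∑ A : Finset (Fin m), (-1 : ℤ) ^ A.card * indZ (polytope (interMatroid 𝓑 𝓜 A)) y
          = ∑ A : Finset (Fin m), if A ⊆ T then (-1 : ℤ) ^ A.card else 0 := by
            refine Finset.sum_congr rfl fun A _ => ?_
            rw [hkey A, mul_ite, mul_one, mul_zero]
        _ = ∑ A ∈ univ.filter (· ⊆ T), (-1 : ℤ) ^ A.card := (Finset.sum_filter _ _).symm
        _ = ∑ A ∈ T.powerset, (-1 : ℤ) ^ A.card := by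
            refine Finset.sum_congr ?_ fun A _ => rfl
            ext A
            simp [Finset.mem_powerset]
        _ = 0 := Finset.sum_powerset_neg_one_pow_card_of_nonempty hTne
    · refine Finset.sum_eq_zero fun A _ => ?_
      rw [indZ_neg fun hmem => hy (interMatroid_polytope_subset 𝓑 𝓜 A hmem), mul_zero]
  -- replace the open set `X` by the convex hull `C` of finitely many witness points
  set W : Finset (Fin n → ℝ) :=
    (univ.filter fun A : Finset (Fin m) => (polytope (interMatroid 𝓑 𝓜 A) ∩ X).Nonempty).image
      (fun A => if h : (polytope (interMatroid 𝓑 𝓜 A) ∩ X).Nonempty then h.some else 0) with hW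
  have hCX : convexHull ℝ (W : Set (Fin n → ℝ)) ⊆ X := by
    refine convexHull_min ?_ hconv
    intro v hv
    obtain ⟨A, hA, rfl⟩ := Finset.mem_image.1 (Finset.mem_coe.1 hv)
    have hne := (Finset.mem_filter.1 hA).2
    rw [dif_pos hne]
    exact hne.some_mem.2
  have hiff : ∀ A : Finset (Fin m),
      (polytope (interMatroid 𝓑 𝓜 A) ∩ convexHull ℝ (W : Set (Fin n → ℝ))).Nonempty ↔
      (polytope (interMatroid 𝓑 𝓜 A) ∩ X).Nonempty := by
    intro A
    constructor
    · rintro ⟨y, h1, h2⟩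
      exact ⟨y, h1, hCX h2⟩
    · intro h
      refine ⟨h.some, h.some_mem.1, subset_convexHull ℝ _ ?_⟩
      refine Finset.mem_coe.2 (Finset.mem_image.2 ⟨A, Finset.mem_filter.2 ⟨mem_univ A, h⟩, ?_⟩)
      rw [dif_pos h]
  have hg := groemer n (fun A : Finset (Fin m) => (-1 : ℤ) ^ A.card)
    (fun A => polytope (interMatroid 𝓑 𝓜 A)) (fun A => polytope_compact _)
    (fun A => polytope_convex _) hpt (convexHull ℝ (W : Set (Fin n → ℝ)))
    (W.finite_toSet.isCompact_convexHull ℝ) (convex_convexHull ℝ _)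
  refine Eq.trans (Finset.sum_congr rfl fun A _ => ?_) hg
  rw [smul_eq_mul]
  congr 1
  show (if (polytope (interMatroid 𝓑 𝓜 A) ∩ X).Nonempty then (1 : ℤ) else 0)
      = neZ (polytope (interMatroid 𝓑 𝓜 A) ∩ convexHull ℝ (W : Set (Fin n → ℝ)))
  by_cases h : (polytope (interMatroid 𝓑 𝓜 A) ∩ X).Nonempty
  · rw [if_pos h, neZ_pos ((hiff A).2 h)]
  · rw [if_neg h, neZ_neg fun hc => h ((hiff A).1 hc)]
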